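/- Assume that (E, F) admits energy measures: for each f ∈ B(E) there exists a nonnegative measure Γ(f) on σ(B(E)) such that every function of B(E) is Γ(f)-integrable and 2 ∫_X φ dΓ(f) = 2 E(φf, f) − E(φ, f²) for all φ ∈ B(E). Then for every f ∈ B(E) the transferred Radon measure (Γ(f))^ on Δ satisfies 2 ∫_Δ φ̂ d(Γ(f))^ = 2 Ê(φ̂ f̂, f̂) − Ê(φ̂, f̂²) for all φ ∈ B(E); consequently (Γ(f))^ coincides with the energy measure Γ̂(f̂) of f̂ for the transferred Dirichlet form. -/

import Mathlib

open MeasureTheory Filter Topology BoundedContinuousFunction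
open scoped ZeroAtInfty ENNReal

/-- The complexification of a bounded real-valued function: we regard a bounded real
function on `X` as a bounded complex function. (`X` carries the discrete topology, so
`X →ᵇ ℝ` is exactly the space of bounded real-valued functions on `X`.) -/
noncomputable def cplx {X : Type*} [TopologicalSpace X] (f : X →ᵇ ℝ) : X →ᵇ ℂ :=
  BoundedContinuousFunction.comp Complex.ofReal Complex.isometry_ofReal.lipschitz f

/-- `A(B)`: the closure, in the supremum norm, of the complexification `B + iB` of a
set `B` of bounded real-valued functions, inside the C*-algebra of all bounded
complex-valued functions on `X`. -/
noncomputable def AofB {X : Type*} [TopologicalSpace X] (B : Set (X →ᵇ ℝ)) : Set (X →ᵇ ℂ) :=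
  closure {a : X →ᵇ ℂ | ∃ f ∈ B, ∃ g ∈ B, a = cplx f + Complex.I • cplx g}

/-- `B(E)`: the bounded measurable functions on `X` whose `μ`-equivalence class lies in
`F ∩ L¹(X, μ)` (here `F` is a set of functions closed under `μ`-a.e. modification, playing
the role of the domain of the Dirichlet form). -/
def BE {X : Type*} [TopologicalSpace X] {mX : MeasurableSpace X} (μ : Measure X)
    (F : Set (X → ℝ)) : Set (X →ᵇ ℝ) :=
  {f : X →ᵇ ℝ | Measurable (⇑f) ∧ (⇑f : X → ℝ) ∈ F ∧ Integrable (⇑f) μ}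

/- ### Auxiliary material -/

@[simp] lemma cplx_apply {X : Type*} [TopologicalSpace X] (f : X →ᵇ ℝ) (x : X) :
    cplx f x = (f x : ℂ) := rfl

lemma cut_abs_le (t : ℝ) : |min (max t 0) 1| ≤ |t| := by
  rw [abs_le]
  constructor
  · have : (0:ℝ) ≤ min (max t 0) 1 := le_min (le_max_right t 0) zero_le_one
    linarith [abs_nonneg t]
  · exact le_trans (min_le_left _ _) (max_le (le_abs_self t) (abs_nonneg t))

/-- The unit contraction of a bounded function. -/
noncomputable def cutBCF {X : Type*} [TopologicalSpace X] [DiscreteTopology X]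
    (g : X →ᵇ ℝ) : X →ᵇ ℝ :=
  BoundedContinuousFunction.mkOfBound
    ⟨fun x => min (max (g x) 0) 1, continuous_of_discreteTopology⟩ 1
    (fun x y => by
      have h1 : (0:ℝ) ≤ min (max (g x) 0) 1 := le_min (le_max_right _ 0) zero_le_one
      have h2 : (0:ℝ) ≤ min (max (g y) 0) 1 := le_min (le_max_right _ 0) zero_le_one
      have h3 : min (max (g x) 0) 1 ≤ 1 := min_le_right _ _
      have h4 : min (max (g y) 0) 1 ≤ 1 := min_le_right _ _
      rw [Real.dist_eq]
      simp only [ContinuousMap.coe_mk]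
      rw [abs_le]; constructor <;> linarith)

@[simp] lemma cutBCF_apply {X : Type*} [TopologicalSpace X] [DiscreteTopology X]
    (g : X →ᵇ ℝ) (x : X) : cutBCF g x = min (max (g x) 0) 1 := rfl

/-- The Gelfand transform of a real-valued function, as a real-valued function on `Δ`. -/
noncomputable def Ghat {X Δ : Type*} [TopologicalSpace X] [TopologicalSpace Δ]
    (G : (X →ᵇ ℂ) → C₀(Δ, ℂ)) (g : X →ᵇ ℝ) (y : Δ) : ℝ := ((G (cplx g)) y).re

lemma int_indicator_le {Δ : Type*} [MeasurableSpace Δ] (m : Measure Δ) {K : Set Δ}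
    (hK : MeasurableSet K) (hKfin : m K ≠ ⊤) {g : Δ → ℝ} (hg : Integrable g m)
    (h0 : ∀ y, 0 ≤ g y) (h1 : ∀ y ∈ K, 1 ≤ g y) :
    (m K).toReal ≤ ∫ y, g y ∂m := by
  have hind : Integrable (K.indicator (fun _ => (1:ℝ))) m :=
    (integrable_indicator_iff hK).2 (integrableOn_const hKfin)
  have heq : ∫ y, K.indicator (fun _ => (1:ℝ)) y ∂m = (m K).toReal := by
    rw [integral_indicator_const (1:ℝ) hK]; simp [Measure.real]
  rw [← heq]
  refine integral_mono hind hg ?_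
  intro y
  by_cases hy : y ∈ K
  · simp [Set.indicator_of_mem hy, h1 y hy]
  · simp [Set.indicator_of_notMem hy, h0 y]

lemma int_le_indicator {Δ : Type*} [MeasurableSpace Δ] (m : Measure Δ) {U : Set Δ}
    (hU : MeasurableSet U) (hUfin : m U ≠ ⊤) {g : Δ → ℝ} (hg : Integrable g m)
    (h1 : ∀ y, g y ≤ 1) (h0 : ∀ y ∉ U, g y ≤ 0) :
    ∫ y, g y ∂m ≤ (m U).toReal := by
  have hind : Integrable (U.indicator (fun _ => (1:ℝ))) m :=
    (integrable_indicator_iff hU).2 (integrableOn_const hUfin)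
  have heq : ∫ y, U.indicator (fun _ => (1:ℝ)) y ∂m = (m U).toReal := by
    rw [integral_indicator_const (1:ℝ) hU]; simp [Measure.real]
  rw [← heq]
  refine integral_mono hg hind ?_
  intro y
  by_cases hy : y ∈ U
  · simp [Set.indicator_of_mem hy, h1 y]
  · simp [Set.indicator_of_notMem hy, h0 y hy]

/-- Two finite regular measures with equal integrals on compactly supported continuous
functions coincide. -/
lemma measure_eq_of_integral_eq {Δ : Type*} [TopologicalSpace Δ] [LocallyCompactSpace Δ]
    [T2Space Δ] [MeasurableSpace Δ] [BorelSpace Δ]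
    (m1 m2 : Measure Δ) (hfin1 : IsFiniteMeasure m1) (hfin2 : IsFiniteMeasure m2)
    (h1 : m1.Regular) (h2 : m2.Regular)
    (h : ∀ k : C(Δ, ℝ), HasCompactSupport ⇑k → ∫ y, k y ∂m1 = ∫ y, k y ∂m2) :
    m1 = m2 := by
  haveI := hfin1; haveI := hfin2; haveI := h1; haveI := h2
  have step : ∀ (μ ν : Measure Δ), IsFiniteMeasure μ → IsFiniteMeasure ν →
      ν.OuterRegular →
      (∀ k : C(Δ, ℝ), HasCompactSupport ⇑k → ∫ y, k y ∂μ = ∫ y, k y ∂ν) →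
      ∀ K : Set Δ, IsCompact K → μ K ≤ ν K := by
    intro μ ν hμ hν hνo hint K hK
    haveI := hμ; haveI := hν; haveI := hνo
    have hle : ∀ U : Set Δ, IsOpen U → K ⊆ U → μ K ≤ ν U := by
      intro U hU hKU
      obtain ⟨k, hk1, hk0, hksupp, hkIcc⟩ :=
        exists_continuous_one_zero_of_isCompact hK hU.isClosed_compl
          (Set.disjoint_compl_right_iff_subset.mpr hKU)
      have hkint1 : Integrable (⇑k) μ := k.continuous.integrable_of_hasCompactSupport hksupp
      have hkint2 : Integrable (⇑k) ν := k.continuous.integrable_of_hasCompactSupport hksupp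
      have i1 : (μ K).toReal ≤ ∫ y, k y ∂μ :=
        int_indicator_le μ hK.measurableSet (measure_ne_top μ K) hkint1
          (fun y => (hkIcc y).1) (fun y hy => le_of_eq (hk1 hy).symm)
      have i2 : ∫ y, k y ∂ν ≤ (ν U).toReal := by
        refine int_le_indicator ν hU.measurableSet (measure_ne_top ν U) hkint2
          (fun y => (hkIcc y).2) ?_
        intro y hy
        exact le_of_eq (hk0 hy)
      rw [hint k hksupp] at i1
      exact (ENNReal.toReal_le_toReal (measure_ne_top μ K) (measure_ne_top ν U)).1
        (le_trans i1 i2)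
    by_contra hcon
    push_neg at hcon
    obtain ⟨U, hKU, hU, hνU⟩ := Set.exists_isOpen_lt_of_lt K (μ K) hcon
    exact absurd (hle U hU hKU) (not_le.mpr hνU)
  have hcomp : ∀ K : Set Δ, IsCompact K → m1 K = m2 K := fun K hK =>
    le_antisymm (step m1 m2 hfin1 hfin2 h2.toOuterRegular h K hK)
      (step m2 m1 hfin2 hfin1 h1.toOuterRegular (fun k hk => (h k hk).symm) K hK)
  ext s hs
  have inner : ∀ (μ ν : Measure Δ), IsFiniteMeasure μ → IsFiniteMeasure ν → μ.Regular →
      (∀ K : Set Δ, IsCompact K → μ K = ν K) → μ s ≤ ν s := by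
    intro μ ν hμ hν hμr hKeq
    haveI := hμ; haveI := hν; haveI := hμr
    by_contra hcon
    push_neg at hcon
    obtain ⟨K, hKs, hKc, hKlt⟩ :=
      MeasureTheory.Measure.InnerRegularCompactLTTop.innerRegular (μ := μ)
        ⟨hs, measure_ne_top μ s⟩ (ν s) hcon
    rw [hKeq K hKc] at hKlt
    exact absurd (measure_mono hKs) (not_le.mpr hKlt)
  exact le_antisymm (inner m1 m2 hfin1 hfin2 h1 hcomp)
    (inner m2 m1 hfin2 hfin1 h2 (fun K hK => (hcomp K hK).symm))

/-- Assume `(E, F)` admits energy measures: for `f ∈ B(E)` let `Γ` be a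
nonnegative measure on `σ(B(E))` integrating all of `B(E)` with
`2 ∫_X φ dΓ = 2 E(φf, f) − E(φ, f²)` for all `φ ∈ B(E)`.  Let `Γ̂` be the transferred
Radon measure of `Γ` on `Δ`.  Then `2 ∫_Δ φ̂ dΓ̂ = 2 Ê(φ̂ f̂, f̂) − Ê(φ̂, f̂²)` for all
`φ ∈ B(E)`; consequently `Γ̂ = (Γ(f))^` coincides with the energy measure of `f̂` for the
transferred Dirichlet form (the unique finite nonnegative Radon measure with that
property). -/
theorem transferred_energy_measure_eq {X : Type*} [Nonempty X] [TopologicalSpace X] [DiscreteTopology X]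
    {mX : MeasurableSpace X} (μ : Measure X)
    (F : Set (X → ℝ)) (E : (X → ℝ) → (X → ℝ) → ℝ)
    -- (E, F) is a symmetric Dirichlet form on L²(X, μ; ℝ):
    (hF2 : ∀ f ∈ F, MemLp f 2 μ)
    (hFae : ∀ f ∈ F, ∀ g : X → ℝ, g =ᵐ[μ] f → g ∈ F)
    (hFadd : ∀ f ∈ F, ∀ g ∈ F, f + g ∈ F)
    (hFsmul : ∀ (c : ℝ), ∀ f ∈ F, c • f ∈ F)
    (hFdense : Dense {h : Lp ℝ 2 μ | ∃ f ∈ F, (⇑h : X → ℝ) =ᵐ[μ] f})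
    (hEsymm : ∀ f g, E f g = E g f)
    (hEae : ∀ f g f' : X → ℝ, f' =ᵐ[μ] f → E f g = E f' g)
    (hEadd : ∀ f ∈ F, ∀ g ∈ F, ∀ h ∈ F, E (f + g) h = E f h + E g h)
    (hEsmul : ∀ (c : ℝ), ∀ f ∈ F, ∀ g ∈ F, E (c • f) g = c * E f g)
    (hEpos : ∀ f ∈ F, 0 ≤ E f f)
    -- closedness: F is complete in the norm (E(u,u) + ‖u‖²_{L²})^{1/2}
    (hEclosed : ∀ u : ℕ → (X → ℝ), (∀ n, u n ∈ F) →
      (∀ ε > 0, ∃ N, ∀ n ≥ N, ∀ m ≥ N,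
        E (u n - u m) (u n - u m) + ((eLpNorm (u n - u m) 2 μ).toReal) ^ 2 < ε) →
      ∃ v ∈ F, Tendsto
        (fun n => E (u n - v) (u n - v) + ((eLpNorm (u n - v) 2 μ).toReal) ^ 2)
        atTop (𝓝 0))
    -- Markov property
    (hMarkov : ∀ f ∈ F, (fun x => min (max (f x) 0) 1) ∈ F ∧
      E (fun x => min (max (f x) 0) 1) (fun x => min (max (f x) 0) 1) ≤ E f f)
    -- B(E) vanishes nowhere and is separable in the supremum norm
    (hnv : ∀ x : X, ∃ f ∈ BE μ F, f x ≠ 0)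
    (hsep : TopologicalSpace.IsSeparable (BE μ F))
    {Δ : Type*} [TopologicalSpace Δ] [LocallyCompactSpace Δ] [T2Space Δ]
    [SecondCountableTopology Δ] [MeasurableSpace Δ] [BorelSpace Δ]
    (ι : X → Δ) (hι : DenseRange ι)
    (G : (X →ᵇ ℂ) → C₀(Δ, ℂ))
    (hGeval : ∀ a ∈ AofB (BE μ F), ∀ x : X, G a (ι x) = a x)
    (hGsurj : ∀ h : C₀(Δ, ℂ), ∃ a ∈ AofB (BE μ F), G a = h)
    (ν : Measure Δ) (hνreg : ν.Regular)
    (hν : ∀ f ∈ BE μ F, Integrable (fun φ => ((G (cplx f)) φ).re) ν ∧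
      ∫ x, f x ∂μ = ∫ φ, ((G (cplx f)) φ).re ∂ν)
    (f : X →ᵇ ℝ) (hf : f ∈ BE μ F)
    -- Γ is a nonnegative measure on σ(B(E)), the σ-algebra generated by B(E)
    (mE : MeasurableSpace X)
    (hmE : mE = ⨆ g ∈ BE μ F, MeasurableSpace.comap (⇑g : X → ℝ) inferInstance)
    (Γ : @Measure X mE)
    (hΓint : ∀ g ∈ BE μ F, Integrable (⇑g) Γ)
    (hΓ : ∀ φ ∈ BE μ F,
      2 * ∫ x, φ x ∂Γ = 2 * E (⇑φ * ⇑f) (⇑f) - E (⇑φ) (⇑f * ⇑f))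
    -- Γh = (Γ(f))^ is the transferred Radon measure of Γ on Δ
    (Γh : Measure Δ) (hΓhreg : Γh.Regular)
    (hΓh : ∀ g ∈ BE μ F, Integrable (fun y => ((G (cplx g)) y).re) Γh ∧
      ∫ x, g x ∂Γ = ∫ y, ((G (cplx g)) y).re ∂Γh) :
    (∀ φ ∈ BE μ F,
      2 * ∫ y, ((G (cplx φ)) y).re ∂Γh =
        2 * E (⇑φ * ⇑f) (⇑f) - E (⇑φ) (⇑f * ⇑f)) ∧
    ∀ Γ' : Measure Δ, Γ'.Regular → IsFiniteMeasure Γ' →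
      (∀ φ ∈ BE μ F,
        2 * ∫ y, ((G (cplx φ)) y).re ∂Γ' =
          2 * E (⇑φ * ⇑f) (⇑f) - E (⇑φ) (⇑f * ⇑f)) →
      Γh = Γ' := by
  classical
  have part1 : ∀ φ ∈ BE μ F,
      2 * ∫ y, ((G (cplx φ)) y).re ∂Γh =
        2 * E (⇑φ * ⇑f) (⇑f) - E (⇑φ) (⇑f * ⇑f) := by
    intro φ hφ
    rw [← (hΓh φ hφ).2]
    exact hΓ φ hφ
  refine ⟨part1, ?_⟩
  intro Γ' hreg' hfin' hint'
  haveI := hΓhreg; haveI := hreg'; haveI := hfin'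
  -- the zero function lies in `B(E)`
  have h0BE : (0 : X →ᵇ ℝ) ∈ BE μ F := by
    refine ⟨?_, ?_, ?_⟩
    · rw [BoundedContinuousFunction.coe_zero]
      exact measurable_const
    · rw [BoundedContinuousFunction.coe_zero]
      have h0 := hFsmul 0 (⇑f) hf.2.1
      rwa [zero_smul] at h0
    · rw [BoundedContinuousFunction.coe_zero]
      exact integrable_zero X ℝ μ
  -- complexifications of elements of `B(E)` lie in `A(B(E))`
  have hmemA : ∀ g ∈ BE μ F, cplx g ∈ AofB (BE μ F) := by
    intro g hg
    have he : cplx g = cplx g + Complex.I • cplx (0 : X →ᵇ ℝ) := by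
      ext x
      simp
    rw [he]
    exact subset_closure ⟨g, hg, 0, h0BE, rfl⟩
  -- basic properties of the transform
  have hTcont : ∀ g : X →ᵇ ℝ, Continuous (Ghat G g) :=
    fun g => Complex.continuous_re.comp (map_continuous (G (cplx g)))
  have hTeval : ∀ g ∈ BE μ F, ∀ x : X, Ghat G g (ι x) = g x := by
    intro g hg x
    unfold Ghat
    rw [hGeval _ (hmemA g hg) x]
    simp
  have hTbdd : ∀ g : X →ᵇ ℝ, ∀ y, |Ghat G g y| ≤ ‖(G (cplx g)).toBCF‖ := by
    intro g y
    calc |Ghat G g y| ≤ ‖(G (cplx g)) y‖ := by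
          exact Complex.abs_re_le_norm _
      _ ≤ ‖(G (cplx g)).toBCF‖ := BoundedContinuousFunction.norm_coe_le_norm (G (cplx g)).toBCF y
  have hTint : ∀ (m : Measure Δ), IsFiniteMeasure m → ∀ g : X →ᵇ ℝ,
      Integrable (Ghat G g) m := by
    intro m hm g
    haveI := hm
    refine (integrable_const (‖(G (cplx g)).toBCF‖)).mono'
      ((hTcont g).aestronglyMeasurable) ?_
    exact ae_of_all _ fun y => by simpa [Real.norm_eq_abs] using hTbdd g y
  -- extension principles from the dense range of ι
  have hext : ∀ u v : Δ → ℝ, Continuous u → Continuous v →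
      (∀ x : X, u (ι x) = v (ι x)) → u = v := by
    intro u v hu hv h
    exact hu.ext_on hι hv (by rintro y ⟨x, rfl⟩; exact h x)
  have hle : ∀ (u : Δ → ℝ) (c : ℝ), Continuous u → (∀ x : X, u (ι x) ≤ c) →
      ∀ y, u y ≤ c := by
    intro u c hu h y
    have hcl : IsClosed {y : Δ | u y ≤ c} := isClosed_le hu continuous_const
    have hsub : Set.range ι ⊆ {y : Δ | u y ≤ c} := by rintro _ ⟨x, rfl⟩; exact h x
    exact hcl.closure_subset_iff.mpr hsub (hι y)
  -- every compactly supported continuous function on Δ is uniformly approximated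
  -- by transforms of elements of B(E)
  have happrox : ∀ k : C(Δ, ℝ), HasCompactSupport ⇑k → ∀ ε : ℝ, 0 < ε →
      ∃ φ ∈ BE μ F, ∀ y, |Ghat G φ y - k y| ≤ ε := by
    intro k hk ε hε
    have hcc : HasCompactSupport (fun y => ((k y : ℝ) : ℂ)) :=
      hk.comp_left (g := fun t : ℝ => (t : ℂ)) (by simp)
    have hzero : Tendsto (fun y => ((k y : ℝ) : ℂ)) (cocompact Δ) (𝓝 0) :=
      hcc.is_zero_at_infty
    let k' : C₀(Δ, ℂ) :=
      ⟨⟨fun y => ((k y : ℝ) : ℂ), Complex.continuous_ofReal.comp k.continuous⟩, hzero⟩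
    obtain ⟨a, haA, haG⟩ := hGsurj k'
    have haA' : a ∈ closure {b : X →ᵇ ℂ |
        ∃ p ∈ BE μ F, ∃ q ∈ BE μ F, b = cplx p + Complex.I • cplx q} := haA
    obtain ⟨b, hbS, hbd⟩ := Metric.mem_closure_iff.1 haA' ε hε
    have hbA : b ∈ AofB (BE μ F) := subset_closure hbS
    obtain ⟨φ, hφ, ψ, hψ, hbeq⟩ := hbS
    refine ⟨φ, hφ, ?_⟩
    have hdiff : ∀ y, ‖(G b) y - (G a) y‖ ≤ ε := by
      refine hle _ ε ?_ ?_
      · exact continuous_norm.comp ((map_continuous (G b)).sub (map_continuous (G a)))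
      · intro x
        rw [hGeval b hbA x, hGeval a haA x]
        calc ‖b x - a x‖ = dist (b x) (a x) := by rw [Complex.dist_eq]
          _ ≤ dist b a := BoundedContinuousFunction.dist_coe_le_dist x
          _ ≤ ε := le_of_lt (by rwa [dist_comm])
    have hTb : Ghat G φ = fun y => ((G b) y).re := by
      refine hext _ _ (hTcont φ)
        (Complex.continuous_re.comp (map_continuous (G b))) ?_
      intro x
      rw [hTeval φ hφ x, hGeval b hbA x, hbeq]
      simp
    intro y
    have hky : k y = ((G a) y).re := by rw [haG]; simp [k']
    rw [hTb, hky]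
    calc |((G b) y).re - ((G a) y).re| = |((G b) y - (G a) y).re| := by rw [Complex.sub_re]
      _ ≤ ‖(G b) y - (G a) y‖ := Complex.abs_re_le_norm _
      _ ≤ ε := hdiff y
  -- B(E) is stable under the unit contraction
  have hcutBE : ∀ g ∈ BE μ F, cutBCF g ∈ BE μ F := by
    intro g hg
    refine ⟨(hg.1.max measurable_const).min measurable_const, (hMarkov _ hg.2.1).1, ?_⟩
    refine hg.2.2.mono
      (((hg.1.max measurable_const).min measurable_const).aestronglyMeasurable) ?_
    exact ae_of_all _ fun x => by simpa [Real.norm_eq_abs] using cut_abs_le (g x)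
  have hcutT : ∀ g ∈ BE μ F, ∀ y,
      Ghat G (cutBCF g) y = min (max (Ghat G g y) 0) 1 := by
    intro g hg
    have h := hext (Ghat G (cutBCF g)) (fun y => min (max (Ghat G g y) 0) 1)
      (hTcont _) (((hTcont g).max continuous_const).min continuous_const)
      (by
        intro x
        show Ghat G (cutBCF g) (ι x) = min (max (Ghat G g (ι x)) 0) 1
        rw [hTeval _ (hcutBE g hg) x, hTeval g hg x, cutBCF_apply])
    exact fun y => congrFun h y
  -- integrals of transforms with respect to Γh and Γ' agree
  have eqI : ∀ g ∈ BE μ F, ∫ y, Ghat G g y ∂Γh = ∫ y, Ghat G g y ∂Γ' := by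
    intro g hg
    have h1 : ∫ x, g x ∂Γ = ∫ y, Ghat G g y ∂Γh := (hΓh g hg).2
    have h2 := hΓ g hg
    have h3 : 2 * ∫ y, Ghat G g y ∂Γ' =
        2 * E (⇑g * ⇑f) (⇑f) - E (⇑g) (⇑f * ⇑f) := hint' g hg
    linarith
  -- Γh is a finite measure
  have hcompK : ∀ K : Set Δ, IsCompact K → Γh K ≤ Γ' Set.univ := by
    intro K hK
    obtain ⟨k, hk1, hk0, hksupp, hkIcc⟩ :=
      exists_continuous_one_zero_of_isCompact hK isClosed_empty (Set.disjoint_empty K)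
    let k2 : C(Δ, ℝ) := ⟨fun y => 2 * k y, continuous_const.mul k.continuous⟩
    have hk2supp : HasCompactSupport ⇑k2 :=
      hksupp.comp_left (g := fun t : ℝ => 2 * t) (by norm_num)
    obtain ⟨φ, hφ, happ⟩ := happrox k2 hk2supp (1/2) (by norm_num)
    have hψBE := hcutBE φ hφ
    have hψK : ∀ y ∈ K, (1:ℝ) ≤ Ghat G (cutBCF φ) y := by
      intro y hy
      rw [hcutT φ hφ y]
      have h2k : k2 y = 2 := by
        have : k y = 1 := hk1 hy
        simp [k2, this]
      have h := happ y
      rw [h2k] at h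
      have hφy : (3:ℝ)/2 ≤ Ghat G φ y := by
        have h' := abs_le.1 h
        linarith [h'.1]
      have hmax : max (Ghat G φ y) 0 = Ghat G φ y := max_eq_left (by linarith)
      rw [hmax]
      exact le_min (by linarith) le_rfl
    have hψ0 : ∀ y, 0 ≤ Ghat G (cutBCF φ) y := by
      intro y
      rw [hcutT φ hφ y]
      exact le_min (le_max_right _ 0) zero_le_one
    have hψ1 : ∀ y, Ghat G (cutBCF φ) y ≤ 1 := by
      intro y
      rw [hcutT φ hφ y]
      exact min_le_right _ _
    have hind : (Γh K).toReal ≤ ∫ y, Ghat G (cutBCF φ) y ∂Γh :=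
      int_indicator_le Γh hK.measurableSet hK.measure_lt_top.ne
        ((hΓh _ hψBE).1) hψ0 hψK
    have h2 : ∫ y, Ghat G (cutBCF φ) y ∂Γ' ≤ (Γ' Set.univ).toReal :=
      int_le_indicator Γ' MeasurableSet.univ (measure_ne_top Γ' _)
        (hTint Γ' hfin' _) hψ1 (fun y hy => absurd (Set.mem_univ y) hy)
    have h1 := eqI _ hψBE
    have hfin : (Γh K).toReal ≤ (Γ' Set.univ).toReal := by linarith
    exact (ENNReal.toReal_le_toReal hK.measure_lt_top.ne (measure_ne_top Γ' _)).1 hfin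
  have hfinΓh : IsFiniteMeasure Γh := by
    constructor
    rcases lt_or_ge (Γ' Set.univ) (Γh Set.univ) with hlt | hle2
    · obtain ⟨K, -, hKc, hKlt⟩ := hΓhreg.innerRegular isOpen_univ (Γ' Set.univ) hlt
      exact absurd (hcompK K hKc) (not_le.mpr hKlt)
    · exact lt_of_le_of_lt hle2 (measure_lt_top Γ' _)
  haveI := hfinΓh
  -- integrals of compactly supported continuous functions agree
  have heqint : ∀ k : C(Δ, ℝ), HasCompactSupport ⇑k →
      ∫ y, k y ∂Γh = ∫ y, k y ∂Γ' := by
    intro k hk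
    have hki1 : Integrable ⇑k Γh := k.continuous.integrable_of_hasCompactSupport hk
    have hki2 : Integrable ⇑k Γ' := k.continuous.integrable_of_hasCompactSupport hk
    have key : ∀ ε : ℝ, 0 < ε →
        |(∫ y, k y ∂Γh) - ∫ y, k y ∂Γ'| ≤
          ε * ((Γh Set.univ).toReal + (Γ' Set.univ).toReal) := by
      intro ε hε
      obtain ⟨φ, hφ, happ⟩ := happrox k hk ε hε
      have hφint : Integrable (fun y => Ghat G φ y) Γh := (hΓh φ hφ).1
      have hφint' : Integrable (fun y => Ghat G φ y) Γ' := hTint Γ' hfin' φ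
      have e1 : |(∫ y, k y ∂Γh) - ∫ y, Ghat G φ y ∂Γh| ≤ ε * (Γh Set.univ).toReal := by
        rw [← integral_sub hki1 hφint]
        have h := norm_integral_le_of_norm_le_const (μ := Γh)
          (f := fun y => k y - Ghat G φ y) (C := ε)
          (ae_of_all _ fun y => by
            rw [Real.norm_eq_abs, abs_sub_comm]; exact happ y)
        simpa [Real.norm_eq_abs, Measure.real] using h
      have e2 : |(∫ y, k y ∂Γ') - ∫ y, Ghat G φ y ∂Γ'| ≤ ε * (Γ' Set.univ).toReal := by
        rw [← integral_sub hki2 hφint']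
        have h := norm_integral_le_of_norm_le_const (μ := Γ')
          (f := fun y => k y - Ghat G φ y) (C := ε)
          (ae_of_all _ fun y => by
            rw [Real.norm_eq_abs, abs_sub_comm]; exact happ y)
        simpa [Real.norm_eq_abs, Measure.real] using h
      have e3 := eqI φ hφ
      have hDeq : (∫ y, k y ∂Γh) - ∫ y, k y ∂Γ' =
          ((∫ y, k y ∂Γh) - ∫ y, Ghat G φ y ∂Γh) -
            ((∫ y, k y ∂Γ') - ∫ y, Ghat G φ y ∂Γ') := by
        rw [e3]; ring
      rw [hDeq]
      calc |((∫ y, k y ∂Γh) - ∫ y, Ghat G φ y ∂Γh) -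
            ((∫ y, k y ∂Γ') - ∫ y, Ghat G φ y ∂Γ')|
          ≤ |(∫ y, k y ∂Γh) - ∫ y, Ghat G φ y ∂Γh| +
            |(∫ y, k y ∂Γ') - ∫ y, Ghat G φ y ∂Γ'| := abs_sub _ _
        _ ≤ ε * (Γh Set.univ).toReal + ε * (Γ' Set.univ).toReal := add_le_add e1 e2
        _ = ε * ((Γh Set.univ).toReal + (Γ' Set.univ).toReal) := by ring
    set C := (Γh Set.univ).toReal + (Γ' Set.univ).toReal with hC
    set D := (∫ y, k y ∂Γh) - ∫ y, k y ∂Γ' with hD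
    have hC0 : 0 ≤ C := by positivity
    have habs : |D| ≤ 0 := by
      by_contra hcon
      push_neg at hcon
      have h1 := key (|D| / (2 * (C + 1))) (by positivity)
      have h2 : |D| / (2 * (C + 1)) * C < |D| := by
        rw [div_mul_eq_mul_div, div_lt_iff₀ (by positivity)]
        nlinarith
      linarith
    have hD0 : D = 0 := abs_eq_zero.mp (le_antisymm habs (abs_nonneg D))
    have := hD
    linarith
  exact measure_eq_of_integral_eq Γh Γ' hfinΓh hfin' hΓhreg hreg' heqint
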